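/- Let F be a field, p a monic irreducible and separable polynomial of degree n over F, and C its companion matrix. Let Y be an n×n matrix over F commuting with C and let T ∈ M_n(F) be arbitrary. Then CT = TC + Y holds if and only if Y = 0 and T commutes with C. -/

import Mathlib

open Matrix Polynomial

/-- The companion matrix of a monic polynomial `p` of degree `n`:
ones on the first subdiagonal, `-(coefficients of p)` in the last column. -/
def companionMat (F : Type*) [Field F] (n : ℕ) (p : Polynomial F) :
    Matrix (Fin n) (Fin n) F :=
  Matrix.of fun i j =>
    if (j : ℕ) = n - 1 then -p.coeff (i : ℕ)
    else if (i : ℕ) = (j : ℕ) + 1 then 1 else 0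

section Aux

variable {F : Type*} [Field F] {p : Polynomial F}

theorem companionAux_repr (hmonic : p.Monic) (f : AdjoinRoot p) (i : Fin p.natDegree) :
    (AdjoinRoot.powerBasis' hmonic).basis.repr f i
      = (AdjoinRoot.modByMonicHom hmonic f).coeff (i : ℕ) :=
  AdjoinRoot.powerBasisAux'_repr_apply_to_fun hmonic f i

/-- The companion matrix is the left-multiplication matrix of the root in `AdjoinRoot p`. -/
theorem companion_eq_leftMulMatrix (hmonic : p.Monic) (hirr : Irreducible p) :
    Algebra.leftMulMatrix (AdjoinRoot.powerBasis' hmonic).basis (AdjoinRoot.root p) =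
      companionMat F p.natDegree p := by
  have hne : p ≠ 0 := hmonic.ne_zero
  have hn : 0 < p.natDegree := hmonic.natDegree_pos.mpr hirr.ne_one
  ext i j
  have hi' : (i : ℕ) < p.natDegree := i.isLt
  have hj' : (j : ℕ) < p.natDegree := j.isLt
  rw [Algebra.leftMulMatrix_eq_repr_mul]
  have hb : (AdjoinRoot.powerBasis' hmonic).basis j = AdjoinRoot.root p ^ (j : ℕ) := by
    simpa using (AdjoinRoot.powerBasis' hmonic).basis_eq_pow j
  have hmk : AdjoinRoot.root p * AdjoinRoot.root p ^ (j : ℕ)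
      = AdjoinRoot.mk p (X ^ ((j : ℕ) + 1)) := by
    rw [pow_succ']
    simp
  rw [hb, hmk]
  erw [companionAux_repr hmonic]
  rw [AdjoinRoot.modByMonicHom_mk]
  rcases eq_or_ne ((j : ℕ) + 1) p.natDegree with hj | hj
  · -- last column
    have hjc : (j : ℕ) = p.natDegree - 1 := by omega
    have hdlt : (X ^ p.natDegree - p).degree < (X ^ p.natDegree : F[X]).degree := by
      refine Polynomial.degree_sub_lt ?_ (pow_ne_zero _ X_ne_zero) ?_
      · rw [degree_X_pow, Polynomial.degree_eq_natDegree hne]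
      · simp [hmonic.leadingCoeff, Polynomial.leadingCoeff_X_pow]
    have hmod : (X ^ p.natDegree : F[X]) %ₘ p = X ^ p.natDegree - p := by
      have h1 : ((X ^ p.natDegree - p : F[X])) %ₘ p = X ^ p.natDegree - p := by
        rw [Polynomial.modByMonic_eq_self_iff hmonic]
        calc (X ^ p.natDegree - p).degree < (X ^ p.natDegree : F[X]).degree := hdlt
          _ = p.degree := by rw [degree_X_pow, Polynomial.degree_eq_natDegree hne]
      calc (X ^ p.natDegree : F[X]) %ₘ p = ((X ^ p.natDegree - p) + p) %ₘ p := by ring_nf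
        _ = (X ^ p.natDegree - p) %ₘ p + p %ₘ p := Polynomial.add_modByMonic _ _
        _ = X ^ p.natDegree - p := by
              rw [h1, (Polynomial.modByMonic_eq_zero_iff_dvd hmonic).mpr dvd_rfl, add_zero]
    rw [hj, hmod]
    have hi : (i : ℕ) ≠ p.natDegree := by omega
    simp [companionMat, hjc, Polynomial.coeff_X_pow, hi]
    exact (if_pos hjc).symm
  · -- other columns
    have hjlt : (j : ℕ) + 1 < p.natDegree := by omega
    have hmod : ((X : F[X]) ^ ((j : ℕ) + 1)) %ₘ p = X ^ ((j : ℕ) + 1) := by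
      rw [Polynomial.modByMonic_eq_self_iff hmonic, degree_X_pow,
        Polynomial.degree_eq_natDegree hne]
      exact_mod_cast hjlt
    have hjc : (j : ℕ) ≠ p.natDegree - 1 := by omega
    rw [hmod, Polynomial.coeff_X_pow]
    simp only [companionMat, Matrix.of_apply, hjc, if_false]
    exact (if_neg hjc).symm

end Aux

/-- for `p` monic irreducible separable with companion matrix `C`,
`Y ∈ Z(C)` and `T` arbitrary, `CT = TC + Y` iff `Y = 0` and `T ∈ Z(C)`. -/
theorem eq_CT_TC_Y_separable
    {F : Type*} [Field F] {n : ℕ}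
    (p : Polynomial F) (hmonic : p.Monic) (hirr : Irreducible p)
    (hsep : p.Separable) (hdeg : p.natDegree = n)
    (Y T : Matrix (Fin n) (Fin n) F)
    (hY : Y * companionMat F n p = companionMat F n p * Y) :
    companionMat F n p * T = T * companionMat F n p + Y ↔
      (Y = 0 ∧ T * companionMat F n p = companionMat F n p * T) := by
  subst hdeg
  have hne : p ≠ 0 := hmonic.ne_zero
  haveI : Fact (Irreducible p) := ⟨hirr⟩
  set K := AdjoinRoot p with hK
  set b : Module.Basis (Fin p.natDegree) F (AdjoinRoot p) := (AdjoinRoot.powerBasis' hmonic).basis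
    with hbdef
  set ψ := Algebra.leftMulMatrix b with hψ
  set C := companionMat F p.natDegree p with hCdef
  have hC : ψ (AdjoinRoot.root p) = C := companion_eq_leftMulMatrix hmonic hirr
  constructor
  · intro h
    -- Y commutes with the image of ψ
    have hcomm : ∀ a : K, Y * ψ a = ψ a * Y := by
      intro a
      have ha : a ∈ Algebra.adjoin F ({AdjoinRoot.root p} : Set K) := by
        rw [AdjoinRoot.adjoinRoot_eq_top]; trivial
      induction ha using Algebra.adjoin_induction with
      | mem x hx =>
        obtain rfl : x = AdjoinRoot.root p := hx
        rw [hC]; exact hY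
      | algebraMap r =>
        rw [AlgHom.commutes]
        exact (Algebra.commutes r Y).symm
      | add x y _ _ hx hy =>
        rw [map_add, mul_add, add_mul, hx, hy]
      | mul x y _ _ hx hy =>
        rw [_root_.map_mul, ← mul_assoc, hx, mul_assoc, hy, mul_assoc]
    -- Y is left multiplication by some element of K
    obtain ⟨lam, rfl⟩ : ∃ lam : K, Y = ψ lam := by
      refine ⟨Matrix.toLin b b Y 1, ?_⟩
      have hcab : ∀ a : K, Matrix.toLin b b Y a = a * Matrix.toLin b b Y 1 := by
        intro a
        have h1 := congrArg (Matrix.toLin b b) (hcomm a)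
        rw [Matrix.toLin_mul b b b, Matrix.toLin_mul b b b] at h1
        have h2 : Matrix.toLin b b (ψ a) = Algebra.lmul F K a := by
          rw [hψ, Algebra.leftMulMatrix_apply, Matrix.toLin_toMatrix]
        rw [h2] at h1
        have h3 := congrFun (congrArg DFunLike.coe h1) 1
        change Matrix.toLin b b Y (a * 1) = a * Matrix.toLin b b Y 1 at h3
        simpa using h3
      have hYlin : Matrix.toLin b b Y = Algebra.lmul F K (Matrix.toLin b b Y 1) := by
        apply LinearMap.ext
        intro a
        rw [hcab a]
        exact mul_comm _ _
      have := congrArg (LinearMap.toMatrix b b) hYlin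
      rwa [LinearMap.toMatrix_toLin, ← Algebra.leftMulMatrix_apply] at this
    -- trace argument : lam = 0
    haveI : FiniteDimensional F K := (AdjoinRoot.powerBasis' hmonic).finite
    haveI : Algebra.IsSeparable F K := by
      have hsr : IsSeparable F (AdjoinRoot.root p) := by
        rw [IsSeparable, AdjoinRoot.minpoly_root hne, hmonic.leadingCoeff, inv_one,
          Polynomial.C_1, mul_one]
        exact hsep
      have htop : IntermediateField.adjoin F ({AdjoinRoot.root p} : Set K) = ⊤ :=
        IntermediateField.adjoin_eq_top_of_algebra F ({AdjoinRoot.root p} : Set K) AdjoinRoot.adjoinRoot_eq_top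
      haveI h1 : Algebra.IsSeparable F (⊤ : IntermediateField F K) := by
        rw [← htop]
        exact (IntermediateField.isSeparable_adjoin_simple_iff_isSeparable F K).mpr hsr
      exact Algebra.IsSeparable.of_algHom F _
        (IntermediateField.topEquiv (F := F) (E := K)).symm.toAlgHom
    have hlam : lam = 0 := by
      have key : ∀ a : K, Algebra.traceForm F K lam a = 0 := by
        intro a
        have h1 : ψ lam = C * T - T * C := by rw [h]; abel
        have h2 : Algebra.trace F K (lam * a) = Matrix.trace (ψ (lam * a)) :=
          Algebra.trace_eq_matrix_trace b _
        have hca : C * ψ a = ψ a * C := by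
          rw [← hC, ← _root_.map_mul, ← _root_.map_mul, mul_comm]
        rw [Algebra.traceForm_apply, h2, _root_.map_mul, h1]
        calc Matrix.trace ((C * T - T * C) * ψ a)
            = Matrix.trace (C * T * ψ a) - Matrix.trace (T * C * ψ a) := by
              rw [sub_mul, Matrix.trace_sub]
          _ = Matrix.trace (T * (ψ a * C)) - Matrix.trace (T * (C * ψ a)) := by
              rw [mul_assoc, Matrix.trace_mul_comm C, mul_assoc, mul_assoc]
          _ = 0 := by rw [hca, sub_self]
      exact (traceForm_nondegenerate F K).1 lam key
    refine ⟨by rw [hlam]; exact _root_.map_zero ψ, ?_⟩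
    rw [hlam, _root_.map_zero, add_zero] at h
    exact h.symm
  · rintro ⟨rfl, hT⟩
    rw [hT, add_zero]
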